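/- Let q ≥ 2 be an integer, let Π be a finite projective plane of order q, let c ≥ 1 be a real number, and let k be an integer with 2c·√((q+1)·ln(q+1)) + 2 ≤ k and k < (q^2−1)/(q+2). Then the number of k-element point subsets of Π that are saturating is greater than (1 − 1/(q+1)^(2c^2−2)) · C(q^2+q+1, k), where C(n, k) denotes the binomial coefficient; equivalently, a uniformly random k-element point subset of Π is saturating with probability greater than 1 − 1/(q+1)^(2c^2−2). -/

import Mathlib

/-- A point set `S` in a projective plane (with line type `L`) is *saturating* if every point
not in `S` is collinear with two distinct points of `S`. -/
def IsSaturating (L : Type*) {P : Type*} [Membership P L] (S : Set P) : Prop :=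
  ∀ Q : P, Q ∉ S → ∃ P₁ ∈ S, ∃ P₂ ∈ S, P₁ ≠ P₂ ∧ ∃ ℓ : L, Q ∈ ℓ ∧ P₁ ∈ ℓ ∧ P₂ ∈ ℓ

open Finset Configuration Configuration.ProjectivePlane
open scoped Classical

section aux

/-- Generic counting lemma: number of `k`-subsets of `U` on which `π` is injective is at most
`C(|π(U)|, k) * m^k` where `m` bounds the fiber sizes. -/
lemma count_injOn_le {X I : Type*} [DecidableEq X] [DecidableEq I]
    (U : Finset X) (π : X → I) (k m : ℕ)
    (hm : ∀ i, (U.filter (fun x => π x = i)).card ≤ m) :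
    ((U.powersetCard k).filter (fun S : Finset X => Set.InjOn π (S : Set X))).card ≤
      ((U.image π).card.choose k) * m ^ k := by
  classical
  set B := (U.powersetCard k).filter (fun S : Finset X => Set.InjOn π (S : Set X)) with hB
  have hmap : ∀ S ∈ B, S.image π ∈ (U.image π).powersetCard k := by
    intro S hS
    rw [hB, mem_filter, mem_powersetCard] at hS
    rw [mem_powersetCard]
    exact ⟨image_subset_image hS.1.1, by rw [Finset.card_image_of_injOn hS.2, hS.1.2]⟩
  rw [Finset.card_eq_sum_card_fiberwise hmap]
  have hfiber : ∀ T ∈ (U.image π).powersetCard k,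
      (B.filter (fun S => S.image π = T)).card ≤ m ^ k := by
    intro T hT
    rw [mem_powersetCard] at hT
    -- inject into the pi type
    have hEU : ∀ S ∈ B.filter (fun S => S.image π = T), ∀ i ∈ T,
        ∃! x, x ∈ S ∧ π x = i := by
      intro S hS i hi
      rw [mem_filter] at hS
      obtain ⟨hSB, hST⟩ := hS
      rw [hB, mem_filter] at hSB
      rw [← hST, Finset.mem_image] at hi
      obtain ⟨x, hxS, hxi⟩ := hi
      refine ⟨x, ⟨hxS, hxi⟩, ?_⟩
      intro y ⟨hyS, hyi⟩
      exact hSB.2 hyS hxS (by rw [hyi, hxi])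
    set f : Finset X → (∀ i ∈ T, X) := fun S => fun i hi =>
      if hS : S ∈ B.filter (fun S => S.image π = T) then
        Finset.choose (fun x => π x = i) S (hEU S hS i hi)
      else (Finset.mem_image.mp (hT.1 hi)).choose with hf
    have := Finset.card_le_card_of_injOn f
      (s := B.filter (fun S => S.image π = T))
      (t := T.pi (fun i => U.filter (fun x => π x = i)))
      ?_ ?_
    · refine this.trans ?_
      rw [Finset.card_pi]
      calc ∏ i ∈ T, (U.filter (fun x => π x = i)).card ≤ ∏ i ∈ T, m :=
            Finset.prod_le_prod (fun _ _ => Nat.zero_le _) (fun i _ => hm i)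
        _ = m ^ k := by rw [Finset.prod_const, hT.2]
    · intro S hS
      rw [Finset.mem_coe] at hS
      rw [Finset.mem_coe, Finset.mem_pi]
      intro i hi
      simp only [hf]
      rw [dif_pos hS, Finset.mem_filter]
      have h1 := Finset.choose_mem (fun x => π x = i) S (hEU S hS i hi)
      have h2 := Finset.choose_property (fun x => π x = i) S (hEU S hS i hi)
      have hSU : S ⊆ U := by
        rw [mem_filter] at hS
        have := hS.1
        rw [hB, mem_filter, mem_powersetCard] at this
        exact this.1.1
      exact ⟨hSU h1, h2⟩
    · intro S hS S' hS' hff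
      have key : ∀ S₁ S₂ (h₁ : S₁ ∈ B.filter (fun S => S.image π = T))
          (h₂ : S₂ ∈ B.filter (fun S => S.image π = T)),
          f S₁ = f S₂ → S₁ ⊆ S₂ := by
        intro S₁ S₂ h₁ h₂ hfe x hx
        have hiT : π x ∈ T := by
          have := (mem_filter.mp h₁).2
          rw [← this]
          exact Finset.mem_image_of_mem π hx
        have e1 : Finset.choose (fun y => π y = π x) S₁ (hEU S₁ h₁ (π x) hiT) = x := by
          have := (hEU S₁ h₁ (π x) hiT).unique
            (Finset.choose_spec (fun y => π y = π x) S₁ (hEU S₁ h₁ (π x) hiT)) ⟨hx, rfl⟩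
          exact this
        have := congrFun (congrFun hfe (π x)) hiT
        simp only [hf] at this
        rw [dif_pos h₁, dif_pos h₂, e1] at this
        rw [this]
        exact Finset.choose_mem _ _ _
      exact Finset.Subset.antisymm (key S S' hS hS' hff) (key S' S hS' hS hff.symm)
  calc ∑ T ∈ (U.image π).powersetCard k, (B.filter (fun S => S.image π = T)).card
      ≤ ∑ T ∈ (U.image π).powersetCard k, m ^ k := Finset.sum_le_sum hfiber
    _ = ((U.image π).card.choose k) * m ^ k := by
        rw [Finset.sum_const, Finset.card_powersetCard, smul_eq_mul]

lemma descFactorial_cast_prod (n k : ℕ) (h : k ≤ n) :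
    ((n.descFactorial k : ℕ) : ℝ) = ∏ i ∈ range k, ((n : ℝ) - i) := by
  rw [Nat.descFactorial_eq_prod_range, Nat.cast_prod]
  refine Finset.prod_congr rfl fun i hi => ?_
  rw [mem_range] at hi
  rw [Nat.cast_sub (by omega)]

set_option maxHeartbeats 2000000 in
lemma numeric_key (q k : ℕ) (hq : 2 ≤ q) (c : ℝ) (hc : 1 ≤ c)
    (hk₁ : 2 * c * Real.sqrt ((q + 1) * Real.log (q + 1)) + 2 ≤ (k : ℝ))
    (hk₂ : (k : ℝ) < ((q : ℝ) ^ 2 - 1) / ((q : ℝ) + 2)) :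
    ((q ^ 2 + q + 1 : ℕ) : ℝ) * (((q + 1).choose k : ℝ) * (q : ℝ) ^ k) <
      ((q : ℝ) + 1) ^ ((2 : ℝ) - 2 * c ^ 2) * ((q ^ 2 + q + 1).choose k : ℝ) := by
  have hq2 : (2 : ℝ) ≤ (q : ℝ) := by exact_mod_cast hq
  set qr : ℝ := (q : ℝ) with hqr
  have hL : 0 < Real.log (qr + 1) := Real.log_pos (by linarith)
  set Lg : ℝ := Real.log (qr + 1) with hLg
  set A : ℝ := 2 * c * Real.sqrt ((qr + 1) * Lg) with hA
  have hA0 : 0 ≤ A := by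
    apply mul_nonneg (by linarith) (Real.sqrt_nonneg _)
  have hAk : A + 2 ≤ (k : ℝ) := hk₁
  have hkq : (k : ℝ) ≤ qr - 1 := by
    have h1 : ((qr) ^ 2 - 1) / (qr + 2) ≤ qr - 1 := by
      rw [div_le_iff₀ (by linarith)]
      nlinarith
    linarith [lt_of_lt_of_le hk₂ h1]
  have hk2 : 2 ≤ k := by exact_mod_cast (by linarith [Real.sqrt_nonneg ((qr+1)*Lg)] :
    (2 : ℝ) ≤ (k : ℝ))
  have hkq1 : k + 1 ≤ q := by
    have : ((k : ℕ) : ℝ) + 1 ≤ (q : ℝ) := by linarith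
    exact_mod_cast this
  set D : ℝ := qr ^ 2 + qr with hD
  have hD0 : (0 : ℝ) < D := by nlinarith
  set N : ℕ := q ^ 2 + q + 1 with hN
  have hNr : ((N : ℕ) : ℝ) = D + 1 := by push_cast [hN, hD]; ring
  -- termwise bound
  have hterm1 : ∀ i ∈ range k, (0 : ℝ) < qr * (qr + 1 - i) := by
    intro i hi
    rw [mem_range] at hi
    have h1 : (i : ℝ) + 1 ≤ (k : ℝ) := by exact_mod_cast hi
    have : (i : ℝ) ≤ qr - 2 := by linarith
    nlinarith
  have hterm2 : ∀ i ∈ range k, qr * (qr + 1 - i) <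
      Real.exp (-((i : ℝ) * (qr - 1) / D)) * (((N : ℕ) : ℝ) - i) := by
    intro i hi
    rw [mem_range] at hi
    have hik : (i : ℝ) + 1 ≤ (k : ℝ) := by exact_mod_cast hi
    have hiq : (i : ℝ) ≤ qr - 2 := by linarith
    have hi0 : (0 : ℝ) ≤ i := Nat.cast_nonneg i
    have hDi : (0 : ℝ) ≤ D - i := by nlinarith
    have hstep1 : qr * (qr + 1 - i) ≤ (D - i) * (1 - (i : ℝ) * (qr - 1) / D) := by
      have hexp : (D - i) * (1 - (i : ℝ) * (qr - 1) / D) =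
          (D - i) * (D - (i : ℝ) * (qr - 1)) / D := by
        field_simp
      rw [hexp, le_div_iff₀ hD0]
      nlinarith [mul_nonneg (mul_nonneg hi0 hi0) (by linarith : (0:ℝ) ≤ qr - 1)]
    have hstep2 : (D - i) * (1 - (i : ℝ) * (qr - 1) / D) ≤
        (D - i) * Real.exp (-((i : ℝ) * (qr - 1) / D)) := by
      apply mul_le_mul_of_nonneg_left _ hDi
      have := Real.add_one_le_exp (-((i : ℝ) * (qr - 1) / D))
      linarith
    have hstep3 : (D - i) * Real.exp (-((i : ℝ) * (qr - 1) / D)) <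
        Real.exp (-((i : ℝ) * (qr - 1) / D)) * (((N : ℕ) : ℝ) - i) := by
      rw [hNr, mul_comm]
      apply mul_lt_mul_of_pos_left _ (Real.exp_pos _)
      linarith
    linarith
  have hne : (range k).Nonempty := nonempty_range_iff.mpr (by omega)
  have hprod : ∏ i ∈ range k, (qr * (qr + 1 - (i : ℝ))) <
      ∏ i ∈ range k, (Real.exp (-((i : ℝ) * (qr - 1) / D)) * (((N : ℕ) : ℝ) - i)) :=
    Finset.prod_lt_prod_of_nonempty hterm1 hterm2 hne
  have hkN : k ≤ N := by
    have : k ≤ q := by omega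
    have : q ≤ N := by rw [hN]; nlinarith
    omega
  have hprodL : ∏ i ∈ range k, (qr * (qr + 1 - (i : ℝ))) =
      qr ^ k * (((q + 1).descFactorial k : ℕ) : ℝ) := by
    rw [descFactorial_cast_prod (q + 1) k (by omega), Finset.prod_mul_distrib,
      Finset.prod_const, Finset.card_range]
    congr 1
    refine Finset.prod_congr rfl fun i _ => ?_
    push_cast
    ring
  have hsum : ∑ i ∈ range k, -((i : ℝ) * (qr - 1) / D) =
      -((qr - 1) * k * ((k : ℝ) - 1) / (2 * D)) := by
    have h2 : (∑ i ∈ range k, (i : ℝ)) = (k : ℝ) * ((k : ℝ) - 1) / 2 := by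
      have h3 := Finset.sum_range_id_mul_two k
      have h5 := congrArg (Nat.cast : ℕ → ℝ) h3
      push_cast [Nat.cast_sub (show 1 ≤ k by omega)] at h5
      linarith
    have h5 : ∑ i ∈ range k, -((i : ℝ) * (qr - 1) / D) =
        (∑ i ∈ range k, (i : ℝ)) * (-(qr - 1) / D) := by
      rw [Finset.sum_mul]
      exact Finset.sum_congr rfl fun i _ => by ring
    rw [h5, h2]
    field_simp
  have hprodR : ∏ i ∈ range k, (Real.exp (-((i : ℝ) * (qr - 1) / D)) * (((N : ℕ) : ℝ) - i)) =
      Real.exp (-((qr - 1) * k * ((k : ℝ) - 1) / (2 * D))) * ((N.descFactorial k : ℕ) : ℝ) := by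
    rw [Finset.prod_mul_distrib, ← Real.exp_sum, hsum, descFactorial_cast_prod N k hkN]
  -- the exponent bound
  have hA2 : A ^ 2 = 4 * c ^ 2 * ((qr + 1) * Lg) := by
    rw [hA, mul_pow, mul_pow, Real.sq_sqrt (by positivity)]
    ring
  have hexpbound : 2 * c ^ 2 * Lg ≤ (qr - 1) * k * ((k : ℝ) - 1) / (2 * D) := by
    rw [le_div_iff₀ (by linarith)]
    have h1 : (A + 2) * (A + 1) ≤ (k : ℝ) * ((k : ℝ) - 1) :=
      mul_le_mul hAk (by linarith) (by linarith) (by linarith)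
    have h2 : A ≤ 3 * (qr - 1) := by linarith
    have h3 : qr * A ^ 2 ≤ (qr - 1) * ((A + 2) * (A + 1)) := by
      nlinarith [mul_nonneg hA0 (by linarith : (0 : ℝ) ≤ 3 * (qr - 1) - A)]
    have h4 : (qr - 1) * ((A + 2) * (A + 1)) ≤ (qr - 1) * ((k : ℝ) * ((k : ℝ) - 1)) :=
      mul_le_mul_of_nonneg_left h1 (by linarith)
    have h5 : qr * A ^ 2 = 2 * c ^ 2 * Lg * (2 * D) := by
      rw [hA2, hD]; ring
    nlinarith
  have hB : ((N : ℕ) : ℝ) * Real.exp (-((qr - 1) * k * ((k : ℝ) - 1) / (2 * D))) ≤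
      (qr + 1) ^ ((2 : ℝ) - 2 * c ^ 2) := by
    have hq1 : (0 : ℝ) < qr + 1 := by linarith
    have hrw : (qr + 1) ^ ((2 : ℝ) - 2 * c ^ 2) =
        Real.exp (((2 : ℝ) - 2 * c ^ 2) * Lg) := by
      rw [Real.rpow_def_of_pos hq1, hLg]
      ring_nf
    have hN2 : ((N : ℕ) : ℝ) ≤ Real.exp (2 * Lg) := by
      have h6 : Real.exp (2 * Lg) = (qr + 1) ^ 2 := by
        rw [hLg, mul_comm, Real.exp_mul, Real.exp_log hq1]
        norm_num
      rw [h6, hNr, hD]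
      nlinarith
    calc ((N : ℕ) : ℝ) * Real.exp (-((qr - 1) * k * ((k : ℝ) - 1) / (2 * D)))
        ≤ Real.exp (2 * Lg) * Real.exp (-((qr - 1) * k * ((k : ℝ) - 1) / (2 * D))) := by
          apply mul_le_mul_of_nonneg_right hN2 (Real.exp_pos _).le
      _ = Real.exp (2 * Lg - (qr - 1) * k * ((k : ℝ) - 1) / (2 * D)) := by
          rw [← Real.exp_add]; ring_nf
      _ ≤ Real.exp (((2 : ℝ) - 2 * c ^ 2) * Lg) := by
          apply Real.exp_le_exp.mpr
          nlinarith
      _ = (qr + 1) ^ ((2 : ℝ) - 2 * c ^ 2) := hrw.symm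
  -- assemble
  have hfac : (0 : ℝ) < (k.factorial : ℝ) := by exact_mod_cast k.factorial_pos
  rw [← mul_lt_mul_iff_of_pos_right hfac]
  have hL1 : ((q + 1).choose k : ℝ) * (k.factorial : ℝ) = (((q + 1).descFactorial k : ℕ) : ℝ) := by
    rw [Nat.descFactorial_eq_factorial_mul_choose]
    push_cast
    ring
  have hL2 : ((N).choose k : ℝ) * (k.factorial : ℝ) = ((N.descFactorial k : ℕ) : ℝ) := by
    rw [Nat.descFactorial_eq_factorial_mul_choose]
    push_cast
    ring
  have hNpos : (0 : ℝ) < ((N : ℕ) : ℝ) := by rw [hNr]; linarith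
  calc ((N : ℕ) : ℝ) * (((q + 1).choose k : ℝ) * qr ^ k) * (k.factorial : ℝ)
      = ((N : ℕ) : ℝ) * (qr ^ k * (((q + 1).descFactorial k : ℕ) : ℝ)) := by
        rw [← hL1]; ring
    _ = ((N : ℕ) : ℝ) * ∏ i ∈ range k, (qr * (qr + 1 - (i : ℝ))) := by rw [hprodL]
    _ < ((N : ℕ) : ℝ) * ∏ i ∈ range k,
          (Real.exp (-((i : ℝ) * (qr - 1) / D)) * (((N : ℕ) : ℝ) - i)) :=
        mul_lt_mul_of_pos_left hprod hNpos
    _ = (((N : ℕ) : ℝ) * Real.exp (-((qr - 1) * k * ((k : ℝ) - 1) / (2 * D)))) *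
          ((N.descFactorial k : ℕ) : ℝ) := by rw [hprodR]; ring
    _ ≤ (qr + 1) ^ ((2 : ℝ) - 2 * c ^ 2) * ((N.descFactorial k : ℕ) : ℝ) := by
        apply mul_le_mul_of_nonneg_right hB (Nat.cast_nonneg _)
    _ = (qr + 1) ^ ((2 : ℝ) - 2 * c ^ 2) * ((N).choose k : ℝ) * (k.factorial : ℝ) := by
        rw [← hL2]; ring

variable {P L : Type*} [Fintype P] [Fintype L] [Membership P L] [ProjectivePlane P L]

lemma badQ_card (q k : ℕ) (horder : order P L = q) (Q : P) :
    ((Finset.univ.powersetCard k).filter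
      (fun S : Finset P => Q ∉ S ∧ ∀ x ∈ S, ∀ y ∈ S, x ≠ y →
        ¬∃ ℓ : L, Q ∈ ℓ ∧ x ∈ ℓ ∧ y ∈ ℓ)).card
      ≤ (q + 1).choose k * q ^ k := by
  obtain ⟨p₁, p₂, p₃, l₁, l₂, l₃, -⟩ := @ProjectivePlane.exists_config P L _ _
  haveI : Nonempty L := ⟨l₁⟩
  set π : P → L := fun x => if h : x = Q then Classical.ofNonempty
    else HasLines.mkLine h with hπ
  have hxπ : ∀ x : P, x ≠ Q → x ∈ π x ∧ Q ∈ π x := by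
    intro x hx
    simp only [hπ, dif_neg hx]
    exact HasLines.mkLine_ax hx
  -- the bad sets inject into the injOn sets
  have hsub : (Finset.univ.powersetCard k).filter
      (fun S : Finset P => Q ∉ S ∧ ∀ x ∈ S, ∀ y ∈ S, x ≠ y →
        ¬∃ ℓ : L, Q ∈ ℓ ∧ x ∈ ℓ ∧ y ∈ ℓ) ⊆
      ((Finset.univ.erase Q).powersetCard k).filter
        (fun S : Finset P => Set.InjOn π (S : Set P)) := by
    intro S hS
    rw [mem_filter, mem_powersetCard] at hS ⊢
    obtain ⟨⟨-, hcard⟩, hQS, hno⟩ := hS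
    refine ⟨⟨fun x hx => Finset.mem_erase.mpr ⟨fun h => hQS (h ▸ hx), mem_univ x⟩, hcard⟩, ?_⟩
    intro x hx y hy hxy
    by_contra hne
    have hxQ : x ≠ Q := fun h => hQS (h ▸ hx)
    have hyQ : y ≠ Q := fun h => hQS (h ▸ hy)
    exact hno x hx y hy hne ⟨π x, (hxπ x hxQ).2, (hxπ x hxQ).1, hxy ▸ (hxπ y hyQ).1⟩
  have hpc : ∀ ℓ : L, (Finset.univ.filter (fun x : P => x ∈ ℓ)).card = q + 1 := by
    intro ℓ
    have := pointCount_eq P ℓ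
    rw [horder] at this
    rw [← this, pointCount, Nat.card_eq_fintype_card, Fintype.card_subtype]
  have hm : ∀ ℓ : L, ((Finset.univ.erase Q).filter (fun x => π x = ℓ)).card ≤ q := by
    intro ℓ
    by_cases hQℓ : Q ∈ ℓ
    · have hsub2 : (Finset.univ.erase Q).filter (fun x => π x = ℓ) ⊆
          (Finset.univ.filter (fun x : P => x ∈ ℓ)).erase Q := by
        intro x hx
        rw [mem_filter, Finset.mem_erase] at hx
        refine Finset.mem_erase.mpr ⟨hx.1.1, mem_filter.mpr ⟨mem_univ x, ?_⟩⟩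
        exact hx.2 ▸ (hxπ x hx.1.1).1
      calc _ ≤ ((Finset.univ.filter (fun x : P => x ∈ ℓ)).erase Q).card :=
              Finset.card_le_card hsub2
        _ = (Finset.univ.filter (fun x : P => x ∈ ℓ)).card - 1 :=
              Finset.card_erase_of_mem (mem_filter.mpr ⟨mem_univ Q, hQℓ⟩)
        _ = q := by rw [hpc ℓ]; omega
    · have : (Finset.univ.erase Q).filter (fun x => π x = ℓ) = ∅ := by
        rw [Finset.eq_empty_iff_forall_notMem]
        intro x hx
        rw [mem_filter, Finset.mem_erase] at hx
        exact hQℓ (hx.2 ▸ (hxπ x hx.1.1).2)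
      rw [this]
      simp
  have himg : ((Finset.univ.erase Q).image π).card ≤ q + 1 := by
    have hsub3 : (Finset.univ.erase Q).image π ⊆
        Finset.univ.filter (fun ℓ : L => Q ∈ ℓ) := by
      intro ℓ hℓ
      rw [Finset.mem_image] at hℓ
      obtain ⟨x, hx, hxℓ⟩ := hℓ
      rw [Finset.mem_erase] at hx
      exact mem_filter.mpr ⟨mem_univ ℓ, hxℓ ▸ (hxπ x hx.1).2⟩
    calc _ ≤ (Finset.univ.filter (fun ℓ : L => Q ∈ ℓ)).card := Finset.card_le_card hsub3
      _ = q + 1 := by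
        have := lineCount_eq L Q
        rw [horder] at this
        rw [← this, lineCount, Nat.card_eq_fintype_card, Fintype.card_subtype]
  calc _ ≤ (((Finset.univ.erase Q).powersetCard k).filter
        (fun S : Finset P => Set.InjOn π (S : Set P))).card := Finset.card_le_card hsub
    _ ≤ (((Finset.univ.erase Q).image π).card.choose k) * q ^ k :=
        count_injOn_le _ π k q hm
    _ ≤ (q + 1).choose k * q ^ k :=
        Nat.mul_le_mul_right _ (Nat.choose_le_choose k himg)

end aux

theorem random_subset_is_saturating (q : ℕ) (hq : 2 ≤ q)
    (P L : Type*) [Fintype P] [Fintype L] [Membership P L]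
    [Configuration.ProjectivePlane P L]
    (horder : Configuration.ProjectivePlane.order P L = q)
    (c : ℝ) (hc : 1 ≤ c) (k : ℕ)
    (hk₁ : 2 * c * Real.sqrt ((q + 1) * Real.log (q + 1)) + 2 ≤ (k : ℝ))
    (hk₂ : (k : ℝ) < ((q : ℝ) ^ 2 - 1) / ((q : ℝ) + 2)) :
    (1 - 1 / ((q : ℝ) + 1) ^ (2 * c ^ 2 - 2)) * ((q ^ 2 + q + 1).choose k : ℝ) <
      (Nat.card {S : Finset P // S.card = k ∧ IsSaturating L (↑S : Set P)} : ℝ) := by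
  classical
  have hcardP : Fintype.card P = q ^ 2 + q + 1 := by
    rw [card_points P L, horder]
  set total : Finset (Finset P) := Finset.univ.powersetCard k with htot
  set sat := total.filter (fun S : Finset P => IsSaturating L (↑S : Set P)) with hsat0
  set bad := total.filter (fun S : Finset P => ¬ IsSaturating L (↑S : Set P)) with hbad0
  have htotal : total.card = (q ^ 2 + q + 1).choose k := by
    rw [htot, Finset.card_powersetCard, Finset.card_univ, hcardP]
  have hsplit : sat.card + bad.card = total.card := by
    rw [hsat0, hbad0, Finset.card_filter_add_card_filter_not]
  have hNatcard : Nat.card {S : Finset P // S.card = k ∧ IsSaturating L (↑S : Set P)} =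
      sat.card := by
    rw [Nat.card_eq_fintype_card, Fintype.card_subtype]
    congr 1
    ext S
    simp only [Finset.mem_filter, hsat0, htot, Finset.mem_powersetCard_univ, Finset.mem_univ,
      true_and]
  have hbadsub : bad ⊆ Finset.univ.biUnion (fun Q : P =>
      (Finset.univ.powersetCard k).filter
        (fun S : Finset P => Q ∉ S ∧ ∀ x ∈ S, ∀ y ∈ S, x ≠ y →
          ¬∃ ℓ : L, Q ∈ ℓ ∧ x ∈ ℓ ∧ y ∈ ℓ)) := by
    intro S hS
    rw [hbad0, Finset.mem_filter] at hS
    obtain ⟨hT, hnot⟩ := hS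
    rw [IsSaturating] at hnot
    push_neg at hnot
    obtain ⟨Q, hQ, hno⟩ := hnot
    refine Finset.mem_biUnion.mpr ⟨Q, Finset.mem_univ Q, Finset.mem_filter.mpr ⟨hT, ?_, ?_⟩⟩
    · simpa using hQ
    · rintro x hx y hy hxy ⟨ℓ, h1, h2, h3⟩
      exact hno x (by simpa using hx) y (by simpa using hy) hxy ℓ h1 h2 h3
  have hbadcard : bad.card ≤ (q ^ 2 + q + 1) * ((q + 1).choose k * q ^ k) := by
    calc bad.card ≤ (Finset.univ.biUnion (fun Q : P =>
        (Finset.univ.powersetCard k).filter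
          (fun S : Finset P => Q ∉ S ∧ ∀ x ∈ S, ∀ y ∈ S, x ≠ y →
            ¬∃ ℓ : L, Q ∈ ℓ ∧ x ∈ ℓ ∧ y ∈ ℓ))).card := Finset.card_le_card hbadsub
      _ ≤ ∑ Q : P, ((Finset.univ.powersetCard k).filter
          (fun S : Finset P => Q ∉ S ∧ ∀ x ∈ S, ∀ y ∈ S, x ≠ y →
            ¬∃ ℓ : L, Q ∈ ℓ ∧ x ∈ ℓ ∧ y ∈ ℓ)).card := Finset.card_biUnion_le
      _ ≤ (Finset.univ : Finset P).card • ((q + 1).choose k * q ^ k) :=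
          Finset.sum_le_card_nsmul _ _ _ (fun Q _ => badQ_card q k horder Q)
      _ = (q ^ 2 + q + 1) * ((q + 1).choose k * q ^ k) := by
          rw [smul_eq_mul, Finset.card_univ, hcardP]
  have hkey := numeric_key q k hq c hc hk₁ hk₂
  have hbadR : (bad.card : ℝ) <
      ((q : ℝ) + 1) ^ ((2 : ℝ) - 2 * c ^ 2) * ((q ^ 2 + q + 1).choose k : ℝ) := by
    refine lt_of_le_of_lt ?_ hkey
    have := hbadcard
    calc (bad.card : ℝ) ≤ ((q ^ 2 + q + 1) * ((q + 1).choose k * q ^ k) : ℕ) := by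
          exact_mod_cast hbadcard
      _ = ((q ^ 2 + q + 1 : ℕ) : ℝ) * (((q + 1).choose k : ℝ) * (q : ℝ) ^ k) := by push_cast; ring
  rw [hNatcard]
  have hsatR : (sat.card : ℝ) = ((q ^ 2 + q + 1).choose k : ℝ) - (bad.card : ℝ) := by
    have h := congrArg (Nat.cast : ℕ → ℝ) (hsplit.trans htotal)
    push_cast at h
    linarith
  rw [hsatR]
  have hε : 1 / ((q : ℝ) + 1) ^ (2 * c ^ 2 - 2) = ((q : ℝ) + 1) ^ ((2 : ℝ) - 2 * c ^ 2) := by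
    rw [one_div, ← Real.rpow_neg (by positivity)]
    congr 1
    ring
  rw [hε]
  have hexpand : (1 - ((q : ℝ) + 1) ^ ((2 : ℝ) - 2 * c ^ 2)) * ((q ^ 2 + q + 1).choose k : ℝ) =
      ((q ^ 2 + q + 1).choose k : ℝ) -
        ((q : ℝ) + 1) ^ ((2 : ℝ) - 2 * c ^ 2) * ((q ^ 2 + q + 1).choose k : ℝ) := by ring
  rw [hexpand]
  linarith
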